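/- Let K be a field of characteristic 0, n ≥ 1, and P = K[x₁,…,xₙ] the polynomial ring. Let X₁,…,Xₙ be K-derivations of P such that for all i, j the constant term of Xᵢ(xⱼ) equals δᵢⱼ (i.e., Xᵢ(xⱼ) evaluated at x = 0 is 1 if i = j and 0 otherwise). If D is a K-derivation of P such that [Xᵢ, D] = 0 for all i = 1,…,n and the constant term of D(xⱼ) is 0 for all j = 1,…,n, then D = 0. In particular, every derivation commuting with all the Xᵢ is uniquely determined by the constant terms of its coefficients. -/

import Mathlib

open MvPolynomial

section AuxLemmasForCentralizer
open Finsupp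

lemma my_coeff_pderiv {K : Type*} [CommSemiring K] {n : ℕ} (k : Fin n)
    (p : MvPolynomial (Fin n) K) (a : Fin n →₀ ℕ) :
    coeff a (pderiv k p) = ((a k : K) + 1) * coeff (a + Finsupp.single k 1) p := by
  induction p using MvPolynomial.induction_on' with
  | monomial s r =>
    rw [pderiv_monomial]
    by_cases h : s = a + Finsupp.single k 1
    · have h1 : s - Finsupp.single k 1 = a := by
        rw [h]; exact add_tsub_cancel_right _ _
      have h2 : s k = a k + 1 := by
        rw [h]; simp
      rw [h1, h, coeff_monomial, coeff_monomial, if_pos rfl, if_pos rfl]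
      simp; ring
    · by_cases hk : s k = 0
      · rw [hk]
        simp [coeff_monomial, h]
      · have hq' : ¬ (s - Finsupp.single k 1 = a) := by
          intro hc
          apply h
          rw [← hc, tsub_add_cancel_of_le]
          exact Finsupp.single_le_iff.mpr (Nat.one_le_iff_ne_zero.mpr hk)
        rw [coeff_monomial, coeff_monomial, if_neg h, if_neg hq', mul_zero]
  | add p q hp hq =>
    simp [map_add, coeff_add, hp, hq, mul_add]

lemma deriv_sum_pderiv {K : Type*} [CommRing K] {n : ℕ}
    (D : Derivation K (MvPolynomial (Fin n) K) (MvPolynomial (Fin n) K))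
    (p : MvPolynomial (Fin n) K) :
    D p = ∑ k : Fin n, pderiv k p * D (X k) := by
  induction p using MvPolynomial.induction_on with
  | C a => simp
  | add p q hp hq => simp [hp, hq, add_mul, Finset.sum_add_distrib]
  | mul_X p i hp =>
    rw [Derivation.leibniz, smul_eq_mul, smul_eq_mul, hp]
    have : ∀ k : Fin n, pderiv k (p * X i) * D (X k)
        = X i * (pderiv k p * D (X k)) + (if k = i then p * D (X i) else 0) := by
      intro k
      rw [pderiv_mul]
      by_cases h : k = i
      · subst h; simp [pderiv_X_self]; ring
      · rw [pderiv_X_of_ne (Ne.symm h), if_neg h]; ring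
    rw [Finset.sum_congr rfl fun k _ => this k, Finset.sum_add_distrib,
      ← Finset.mul_sum, Finset.sum_ite_eq' Finset.univ i, if_pos (Finset.mem_univ i)]
    ring

lemma my_deg_add {n : ℕ} (a b : Fin n →₀ ℕ) :
    ((a + b).sum fun _ e => e) = (a.sum fun _ e => e) + (b.sum fun _ e => e) :=
  Finsupp.sum_add_index' (fun _ => rfl) (fun _ _ _ => rfl)

lemma my_deg_zero {n : ℕ} (d : Fin n →₀ ℕ) (h : (d.sum fun _ e => e) = 0) : d = 0 := by
  ext i
  by_contra hi
  simp only [Finsupp.coe_zero, Pi.zero_apply] at hi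
  have hmem : i ∈ d.support := Finsupp.mem_support_iff.mpr hi
  have := Finset.single_le_sum (f := (d : Fin n → ℕ)) (fun _ _ => Nat.zero_le _) hmem
  rw [Finsupp.sum] at h
  omega

end AuxLemmasForCentralizer

/-- if `X₁, …, Xₙ` are derivations of `K[x₁,…,xₙ]` (char `K` = 0) whose
coefficients have constant terms `δᵢⱼ`, then any derivation `D` commuting with all
the `Xᵢ` and whose coefficients all have zero constant term is zero. In particular,
a derivation commuting with all the `Xᵢ` is determined by the constant terms of its
coefficients. -/
theorem centralizer_determined_by_constant_terms
    {K : Type*} [Field K] [CharZero K] (n : ℕ) (hn : 1 ≤ n)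
    (Xd : Fin n → Derivation K (MvPolynomial (Fin n) K) (MvPolynomial (Fin n) K))
    (hX : ∀ i j : Fin n,
      constantCoeff (Xd i (X j)) = if i = j then (1 : K) else 0)
    (D : Derivation K (MvPolynomial (Fin n) K) (MvPolynomial (Fin n) K))
    (hcomm : ∀ i, ⁅Xd i, D⁆ = 0)
    (hconst : ∀ j, constantCoeff (D (X j)) = 0) :
    D = 0 := by
  have key : ∀ m : ℕ, ∀ d : Fin n →₀ ℕ, (d.sum fun _ e => e) ≤ m →
      ∀ j, coeff d (D (X j)) = 0 := by
    intro m
    induction m with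
    | zero =>
      intro d hd j
      rw [my_deg_zero d (Nat.le_zero.mp hd)]
      exact hconst j
    | succ m ih =>
      intro d hd j
      rcases Nat.lt_or_ge (d.sum fun _ e => e) (m + 1) with h | h
      · exact ih d (Nat.lt_succ_iff.mp h) j
      have hsum : (d.sum fun _ e => e) = m + 1 := le_antisymm hd h
      have hex : ∃ i, d i ≠ 0 := by
        by_contra hc
        push_neg at hc
        have : d = 0 := Finsupp.ext fun i => hc i
        rw [this] at hsum
        simp at hsum
      obtain ⟨i, hi⟩ := hex
      set d' := d - Finsupp.single i 1 with hd'def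
      have hdd : d' + Finsupp.single i 1 = d := by
        rw [hd'def, tsub_add_cancel_of_le]
        exact Finsupp.single_le_iff.mpr (Nat.one_le_iff_ne_zero.mpr hi)
      have hd'sum : (d'.sum fun _ e => e) = m := by
        have := my_deg_add d' (Finsupp.single i 1)
        rw [hdd, hsum] at this
        rw [Finsupp.sum_single_index rfl] at this
        omega
      -- commutation relation applied to X j
      have hcom : (Xd i) (D (X j)) = D ((Xd i) (X j)) := by
        have h0 : (⁅Xd i, D⁆ : Derivation K _ _) (X j) = 0 := by rw [hcomm i]; rfl
        rw [Derivation.commutator_apply] at h0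
        exact sub_eq_zero.mp h0
      have hR : coeff d' (D ((Xd i) (X j))) = 0 := by
        rw [deriv_sum_pderiv D, MvPolynomial.coeff_sum]
        apply Finset.sum_eq_zero
        intro k _
        rw [coeff_mul]
        apply Finset.sum_eq_zero
        intro b hb
        have hb' := Finset.HasAntidiagonal.mem_antidiagonal.mp hb
        have hdeg : (b.2.sum fun _ e => e) ≤ m := by
          have hadd := my_deg_add b.1 b.2
          rw [hb', hd'sum] at hadd
          omega
        rw [ih b.2 hdeg k, mul_zero]
      have hL : coeff d' ((Xd i) (D (X j))) = ((d' i : K) + 1) * coeff d (D (X j)) := by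
        rw [deriv_sum_pderiv (Xd i), MvPolynomial.coeff_sum]
        rw [Finset.sum_eq_single i]
        · rw [coeff_mul, Finset.sum_eq_single ((d', (0 : Fin n →₀ ℕ)))]
          · rw [my_coeff_pderiv, hdd]
            have h1 : coeff 0 ((Xd i) (X i)) = 1 := by
              have hXi := hX i i
              rw [if_pos rfl] at hXi
              exact hXi
            rw [h1, mul_one]
          · intro b hb hbne
            have hb' := Finset.HasAntidiagonal.mem_antidiagonal.mp hb
            have hb2 : b.2 ≠ 0 := by
              intro hc
              apply hbne
              have hb1 : b.1 = d' := by rw [← hb', hc, add_zero]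
              exact Prod.ext hb1 hc
            have hb2deg : 1 ≤ (b.2.sum fun _ e => e) := by
              by_contra hcc
              push_neg at hcc
              exact hb2 (my_deg_zero _ (Nat.lt_one_iff.mp hcc))
            have hdeg : ((b.1 + Finsupp.single i 1).sum fun _ e => e) ≤ m := by
              have h1 := my_deg_add b.1 b.2
              have h2 := my_deg_add b.1 (Finsupp.single i 1)
              rw [hb', hd'sum] at h1
              rw [Finsupp.sum_single_index rfl] at h2
              omega
            rw [my_coeff_pderiv, ih _ hdeg j, mul_zero, zero_mul]
          · intro hnm
            exact absurd (Finset.HasAntidiagonal.mem_antidiagonal.mpr (by simp)) hnm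
        · intro k _ hk
          rw [coeff_mul]
          apply Finset.sum_eq_zero
          intro b hb
          have hb' := Finset.HasAntidiagonal.mem_antidiagonal.mp hb
          by_cases hb2 : b.2 = 0
          · rw [hb2]
            have h0 : coeff 0 ((Xd i) (X k)) = 0 := by
              have hXk := hX i k
              rw [if_neg fun hc => hk hc.symm] at hXk
              exact hXk
            rw [h0, mul_zero]
          · have hb2deg : 1 ≤ (b.2.sum fun _ e => e) := by
              by_contra hcc
              push_neg at hcc
              exact hb2 (my_deg_zero _ (Nat.lt_one_iff.mp hcc))
            have hdeg : ((b.1 + Finsupp.single k 1).sum fun _ e => e) ≤ m := by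
              have h1 := my_deg_add b.1 b.2
              have h2 := my_deg_add b.1 (Finsupp.single k 1)
              rw [hb', hd'sum] at h1
              rw [Finsupp.sum_single_index rfl] at h2
              omega
            rw [my_coeff_pderiv, ih _ hdeg j, mul_zero, zero_mul]
        · intro hnm
          exact absurd (Finset.mem_univ i) hnm
      have hfin : ((d' i : K) + 1) * coeff d (D (X j)) = 0 := by
        rw [← hL, hcom, hR]
      have hne : ((d' i : K) + 1) ≠ 0 := by
        exact Nat.cast_add_one_ne_zero (d' i)
      exact (mul_eq_zero.mp hfin).resolve_left hne
  refine MvPolynomial.derivation_ext fun j => ?_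
  refine MvPolynomial.ext _ _ fun d => ?_
  rw [key (d.sum fun _ e => e) d le_rfl j]
  simp
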